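/- Let A = ⨁_{n≥0} A_n be a graded connected commutative K-algebra, B ⊆ A a graded subalgebra with dim_K B_n ≤ 1 for all n, and suppose A = B ⊕ J as graded K-vector spaces where J is a K-subspace with J·J ⊆ B and J·B ⊆ J ⊕ B. If A is generated as an algebra by a finite set S of homogeneous elements of positive degree, then dim_K A_n ≤ |S| + 1 for all n. -/

import Mathlib

open Pointwise

theorem graded_dimension_bound_of_decomposition
    {K A : Type*} [Field K] [CommRing A] [Algebra K A]
    (𝒜 : ℕ → Submodule K A) [GradedAlgebra 𝒜]
    (hconn : Module.finrank K ↥(𝒜 0) = 1)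
    (B : Subalgebra K A) (J : Submodule K A)
    (hdecomp : ∀ n : ℕ, 𝒜 n = (Subalgebra.toSubmodule B ⊓ 𝒜 n) ⊔ (J ⊓ 𝒜 n))
    (hdisj : Subalgebra.toSubmodule B ⊓ J = ⊥)
    (hBdim : ∀ n : ℕ, Module.finrank K ↥(Subalgebra.toSubmodule B ⊓ 𝒜 n) ≤ 1)
    (hJJ : ∀ x ∈ J, ∀ y ∈ J, x * y ∈ B)
    (hJB : ∀ x ∈ J, ∀ y ∈ B, x * y ∈ J ⊔ Subalgebra.toSubmodule B)
    (S : Finset A) (hShom : ∀ s ∈ S, ∃ d : ℕ, 0 < d ∧ s ∈ 𝒜 d)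
    (hgen : Algebra.adjoin K (S : Set A) = ⊤) :
    ∀ n : ℕ, Module.finrank K ↥(𝒜 n) ≤ S.card + 1 := by
  classical
  -- projection helpers
  have hPmem : ∀ (m : ℕ) (x : A), GradedAlgebra.proj 𝒜 m x ∈ 𝒜 m := fun m x => by
    rw [GradedAlgebra.proj_apply]; exact (DirectSum.decompose 𝒜 x m).2
  have hPsame : ∀ {m : ℕ} {x : A}, x ∈ 𝒜 m → GradedAlgebra.proj 𝒜 m x = x := by
    intro m x hx
    rw [GradedAlgebra.proj_apply, DirectSum.decompose_of_mem_same 𝒜 hx]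
  have hPne : ∀ {k m : ℕ} {x : A}, x ∈ 𝒜 k → k ≠ m → GradedAlgebra.proj 𝒜 m x = 0 := by
    intro k m x hx hkm
    rw [GradedAlgebra.proj_apply, DirectSum.decompose_of_mem_ne 𝒜 hx hkm]
  have hPsum : ∀ x : A,
      ∑ k ∈ (DirectSum.decompose 𝒜 x).support, GradedAlgebra.proj 𝒜 k x = x := fun x => by
    simp only [GradedAlgebra.proj_apply]
    exact DirectSum.sum_support_decompose 𝒜 x
  -- Step A : B is graded
  have hBgraded : ∀ b ∈ B, ∀ m : ℕ, GradedAlgebra.proj 𝒜 m b ∈ B := by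
    intro b hb m
    have h1 : ∀ k : ℕ, ∃ β γ : A, β ∈ Subalgebra.toSubmodule B ⊓ 𝒜 k ∧ γ ∈ J ⊓ 𝒜 k ∧
        β + γ = GradedAlgebra.proj 𝒜 k b := by
      intro k
      have hk : GradedAlgebra.proj 𝒜 k b ∈ 𝒜 k := hPmem k b
      rw [hdecomp k] at hk
      rcases Submodule.mem_sup.mp hk with ⟨β, hβ, γ, hγ, h⟩
      exact ⟨β, γ, hβ, hγ, h⟩
    choose β γ hβ hγ hβγ using h1
    set supp := (DirectSum.decompose 𝒜 b).support with hsupp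
    have hsum : ∑ k ∈ supp, GradedAlgebra.proj 𝒜 k b = b := hPsum b
    have hγ0 : ∑ k ∈ supp, γ k = 0 := by
      have hmem : ∑ k ∈ supp, γ k ∈ Subalgebra.toSubmodule B ⊓ J := by
        rw [Submodule.mem_inf]
        constructor
        · have heq : ∑ k ∈ supp, γ k = b - ∑ k ∈ supp, β k := by
            have h2 : ∑ k ∈ supp, (β k + γ k) = b := by
              rw [← hsum]; exact Finset.sum_congr rfl fun k _ => hβγ k
            rw [Finset.sum_add_distrib] at h2
            exact eq_sub_of_add_eq' h2
          rw [heq]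
          exact Submodule.sub_mem _ ((Subalgebra.mem_toSubmodule B).mpr hb)
            (Submodule.sum_mem _ fun k _ => (Submodule.mem_inf.mp (hβ k)).1)
        · exact Submodule.sum_mem _ fun k _ => (Submodule.mem_inf.mp (hγ k)).1
      rw [hdisj] at hmem
      simpa using hmem
    by_cases hm : m ∈ supp
    · have hγm : γ m = 0 := by
        have h2 : GradedAlgebra.proj 𝒜 m (∑ k ∈ supp, γ k) = γ m := by
          rw [map_sum]
          rw [Finset.sum_eq_single_of_mem m hm
            (fun k _ hkm => hPne (Submodule.mem_inf.mp (hγ k)).2 hkm)]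
          exact hPsame (Submodule.mem_inf.mp (hγ m)).2
        rw [hγ0, map_zero] at h2
        exact h2.symm
      have h3 := hβγ m
      rw [hγm, add_zero] at h3
      rw [← h3]
      exact (Subalgebra.mem_toSubmodule B).mp (Submodule.mem_inf.mp (hβ m)).1
    · have h0 : GradedAlgebra.proj 𝒜 m b = 0 := by
        rw [GradedAlgebra.proj_apply]
        rw [DFinsupp.notMem_support_iff.mp hm]
        rfl
      rw [h0]; exact zero_mem B
  -- Step B : split the generators
  have hSdec : ∀ s : {x // x ∈ S}, ∃ d : ℕ, 0 < d ∧ (s : A) ∈ 𝒜 d := fun s => hShom s s.2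
  choose d hdpos hdmem using hSdec
  have hsplit : ∀ s : {x // x ∈ S}, ∃ bs js : A,
      bs ∈ Subalgebra.toSubmodule B ⊓ 𝒜 (d s) ∧ js ∈ J ⊓ 𝒜 (d s) ∧ bs + js = (s : A) := by
    intro s
    have h := hdmem s
    rw [hdecomp (d s)] at h
    rcases Submodule.mem_sup.mp h with ⟨β, hβ, γ, hγ, hs⟩
    exact ⟨β, γ, hβ, hγ, hs⟩
  choose bb jj hbb hjj hbbjj using hsplit
  -- Step C : the spanning submodule M
  set T : Set A := (B : Set A) ∪ ⋃ s : {x // x ∈ S}, (fun y => jj s * y) '' (B : Set A) with hT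
  set M : Submodule K A := Submodule.span K T with hM
  have hBT : ∀ b ∈ B, b ∈ M := fun b hb => Submodule.subset_span (Or.inl hb)
  have hjT : ∀ (s : {x // x ∈ S}) (b : A), b ∈ B → jj s * b ∈ M := fun s b hb =>
    Submodule.subset_span (Or.inr (Set.mem_iUnion.mpr ⟨s, ⟨b, hb, rfl⟩⟩))
  have hMmul : ∀ x ∈ M, ∀ y ∈ M, x * y ∈ M := by
    have hTT : ∀ x ∈ T, ∀ y ∈ T, x * y ∈ M := by
      intro x hx y hy
      rcases hx with hx | hx
      · rcases hy with hy | hy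
        · exact hBT _ (mul_mem hx hy)
        · rcases Set.mem_iUnion.mp hy with ⟨s, b, hb, rfl⟩
          have h : x * (jj s * b) = jj s * (x * b) := by ring
          rw [h]; exact hjT s _ (mul_mem hx hb)
      · rcases Set.mem_iUnion.mp hx with ⟨s, b, hb, rfl⟩
        rcases hy with hy | hy
        · have h : (jj s * b) * y = jj s * (b * y) := by ring
          rw [h]; exact hjT s _ (mul_mem hb hy)
        · rcases Set.mem_iUnion.mp hy with ⟨t, c, hc, rfl⟩
          have h : (jj s * b) * (jj t * c) = (jj s * jj t) * (b * c) := by ring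
          rw [h]
          exact hBT _ (mul_mem (hJJ _ (Submodule.mem_inf.mp (hjj s)).1 _
            (Submodule.mem_inf.mp (hjj t)).1) (mul_mem hb hc))
    intro x hx y hy
    have hxy : x * y ∈ M * M := Submodule.mul_mem_mul hx hy
    have hMM : M * M ≤ M := by
      rw [hM, Submodule.span_mul_span]
      apply Submodule.span_le.mpr
      intro z hz
      rcases Set.mem_mul.mp hz with ⟨a, ha, b, hb, rfl⟩
      exact hTT a ha b hb
    exact hMM hxy
  have h1M : (1 : A) ∈ M := hBT 1 (one_mem B)
  have hMtop : ∀ x : A, x ∈ M := by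
    intro x
    have hx : x ∈ Algebra.adjoin K (S : Set A) := by rw [hgen]; trivial
    have hle : Algebra.adjoin K (S : Set A) ≤ Submodule.toSubalgebra M h1M (fun x y hx hy => hMmul x hx y hy) := by
      apply Algebra.adjoin_le
      intro s hs
      show s ∈ M
      have hs' : s ∈ S := hs
      have h : s = bb ⟨s, hs'⟩ + jj ⟨s, hs'⟩ := (hbbjj ⟨s, hs'⟩).symm
      rw [h]
      refine Submodule.add_mem _ (hBT _ ?_) ?_
      · exact (Subalgebra.mem_toSubmodule B).mp (Submodule.mem_inf.mp (hbb ⟨s, hs'⟩)).1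
      · have := hjT ⟨s, hs'⟩ 1 (one_mem B)
        simpa using this
    exact hle hx
  -- Step E : each 𝒜 m is finite dimensional
  let F : ℕ → Finset A := fun k => Nat.rec {1} (fun _ Fk => Fk ∪ Fk * S) k
  have hF0 : F 0 = {1} := rfl
  have hFsucc : ∀ k, F (k + 1) = F k ∪ F k * S := fun k => rfl
  have hFmono : ∀ {a b : ℕ}, a ≤ b → F a ⊆ F b := by
    intro a b hab
    induction hab with
    | refl => exact subset_rfl
    | step _ ih =>
      refine ih.trans ?_
      rw [hFsucc]
      exact Finset.subset_union_left
  have hFmul : ∀ (a b : ℕ), ∀ x ∈ F a, ∀ y ∈ F b, x * y ∈ F (a + b) := by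
    intro a b
    induction b with
    | zero =>
      intro x hx y hy
      rw [hF0, Finset.mem_singleton] at hy
      subst hy
      simpa using hx
    | succ b ih =>
      intro x hx y hy
      rw [hFsucc, Finset.mem_union] at hy
      rcases hy with hy | hy
      · have := ih x hx y hy
        exact hFmono (Nat.le_succ (a + b)) this
      · rcases Finset.mem_mul.mp hy with ⟨p, hp, q, hq, rfl⟩
        have h : x * (p * q) = (x * p) * q := by ring
        rw [h]
        have h2 : (x * p) * q ∈ F (a + b) * S := Finset.mul_mem_mul (ih x hx p hp) hq
        have h3 : a + (b + 1) = (a + b) + 1 := by omega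
        rw [h3, hFsucc]
        exact Finset.mem_union_right _ h2
  have hC : ∀ c ∈ Submonoid.closure (S : Set A), ∃ k : ℕ, c ∈ 𝒜 k ∧ c ∈ F k := by
    intro c hc
    induction hc using Submonoid.closure_induction with
    | mem x hx =>
      refine ⟨d ⟨x, hx⟩, hdmem ⟨x, hx⟩, ?_⟩
      have hxS : x ∈ S := hx
      have h1 : x ∈ F 1 := by
        show x ∈ F (0 + 1)
        rw [hFsucc 0, hF0]
        refine Finset.mem_union_right _ ?_
        have h2 := Finset.mul_mem_mul (Finset.mem_singleton_self (1 : A)) hxS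
        simpa using h2
      exact hFmono (hdpos ⟨x, hx⟩) h1
    | one => exact ⟨0, SetLike.GradedOne.one_mem, by rw [hF0]; exact Finset.mem_singleton_self 1⟩
    | mul x y hx hy ihx ihy =>
      rcases ihx with ⟨k1, hk1, hF1⟩
      rcases ihy with ⟨k2, hk2, hF2⟩
      exact ⟨k1 + k2, SetLike.mul_mem_graded hk1 hk2, hFmul k1 k2 x hF1 y hF2⟩
  have hfin : ∀ m : ℕ, FiniteDimensional K (𝒜 m) := by
    intro m
    have hle : 𝒜 m ≤ Submodule.span K (SetLike.coe (F m)) := by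
      intro x hx
      have hxA : x ∈ Subalgebra.toSubmodule (Algebra.adjoin K (S : Set A)) := by
        rw [hgen]; trivial
      rw [Algebra.adjoin_eq_span] at hxA
      have hproj : GradedAlgebra.proj 𝒜 m x = x := hPsame hx
      rw [← hproj]
      have hmap : Submodule.map (GradedAlgebra.proj 𝒜 m)
          (Submodule.span K (Submonoid.closure (S : Set A) : Set A)) ≤
          Submodule.span K (SetLike.coe (F m)) := by
        rw [Submodule.map_span, Submodule.span_le]
        rintro y ⟨c, hc, rfl⟩
        rcases hC c hc with ⟨k, hck, hcF⟩
        by_cases hkm : k = m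
        · subst hkm
          rw [hPsame hck]
          exact Submodule.subset_span hcF
        · rw [hPne hck hkm]
          exact Submodule.zero_mem _
      exact hmap (Submodule.mem_map_of_mem hxA)
    haveI inst : FiniteDimensional K (Submodule.span K (SetLike.coe (F m))) :=
      FiniteDimensional.span_finset K (F m)
    exact @Submodule.finiteDimensional_of_le K A _ _ _ (𝒜 m) _ inst hle
  -- Step D : the dimension bound
  intro n
  haveI := hfin n
  have hprin : ∀ m : ℕ, ∃ v : A,
      (Subalgebra.toSubmodule B ⊓ 𝒜 m : Submodule K A) ≤ Submodule.span K {v} := by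
    intro m
    haveI := hfin m
    haveI : FiniteDimensional K (Subalgebra.toSubmodule B ⊓ 𝒜 m : Submodule K A) :=
      Submodule.finiteDimensional_of_le inf_le_right
    have hp := (Submodule.finrank_le_one_iff_isPrincipal _).mp (hBdim m)
    obtain ⟨v, hv⟩ := hp.principal
    exact ⟨v, le_of_eq hv⟩
  obtain ⟨v0, hv0⟩ := hprin n
  choose u hu using fun s : {x // x ∈ S} => hprin (n - d s)
  set w : {x // x ∈ S} → A := fun s => jj s * u s with hw
  set G : Finset A := insert v0 (Finset.image w S.attach) with hG
  have hAn : 𝒜 n ≤ Submodule.span K (SetLike.coe G) := by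
    intro x hx
    have hproj : GradedAlgebra.proj 𝒜 n x = x := hPsame hx
    rw [← hproj]
    have hmap : Submodule.map (GradedAlgebra.proj 𝒜 n) M ≤ Submodule.span K (SetLike.coe G) := by
      rw [hM, Submodule.map_span, Submodule.span_le]
      rintro y ⟨t, ht, rfl⟩
      rcases ht with ht | ht
      · -- t ∈ B
        have h1 : GradedAlgebra.proj 𝒜 n t ∈ Subalgebra.toSubmodule B ⊓ 𝒜 n :=
          Submodule.mem_inf.mpr ⟨(Subalgebra.mem_toSubmodule B).mpr (hBgraded t ht n), hPmem n t⟩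
        have h2 : ({v0} : Set A) ⊆ (SetLike.coe G) := by
          intro z hz
          rw [Set.mem_singleton_iff] at hz
          subst hz
          exact Finset.mem_insert_self _ _
        exact Submodule.span_mono h2 (hv0 h1)
      · rcases Set.mem_iUnion.mp ht with ⟨s, b, hb, rfl⟩
        have hexp : jj s * b =
            ∑ k ∈ (DirectSum.decompose 𝒜 b).support, jj s * GradedAlgebra.proj 𝒜 k b := by
          rw [← Finset.mul_sum, hPsum b]
        show GradedAlgebra.proj 𝒜 n (jj s * b) ∈ Submodule.span K (SetLike.coe G)
        rw [hexp, map_sum]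
        apply Submodule.sum_mem
        intro k _
        by_cases hkn : d s + k = n
        · have hmemk : jj s * GradedAlgebra.proj 𝒜 k b ∈ 𝒜 (d s + k) :=
            SetLike.mul_mem_graded (Submodule.mem_inf.mp (hjj s)).2 (hPmem k b)
          rw [hkn] at hmemk
          rw [hPsame hmemk]
          have hbk : GradedAlgebra.proj 𝒜 k b ∈
              Subalgebra.toSubmodule B ⊓ 𝒜 (n - d s) := by
            have hk' : k = n - d s := by omega
            refine Submodule.mem_inf.mpr ⟨(Subalgebra.mem_toSubmodule B).mpr
              (hBgraded b hb k), ?_⟩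
            rw [← hk']
            exact hPmem k b
          rcases Submodule.mem_span_singleton.mp (hu s hbk) with ⟨c, hc⟩
          rw [← hc, mul_smul_comm]
          refine Submodule.smul_mem _ c (Submodule.subset_span ?_)
          refine Finset.mem_insert_of_mem ?_
          exact Finset.mem_image.mpr ⟨s, Finset.mem_attach _ _, rfl⟩
        · rw [hPne (SetLike.mul_mem_graded (Submodule.mem_inf.mp (hjj s)).2 (hPmem k b)) hkn]
          exact Submodule.zero_mem _
    exact hmap (Submodule.mem_map_of_mem (hMtop x))
  have hcard : G.card ≤ S.card + 1 := by
    calc G.card ≤ (Finset.image w S.attach).card + 1 := Finset.card_insert_le _ _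
      _ ≤ S.attach.card + 1 := by
          have := Finset.card_image_le (f := w) (s := S.attach)
          omega
      _ = S.card + 1 := by rw [Finset.card_attach]
  have hex : ∃ G' : Finset A, G'.card ≤ S.card + 1 ∧
      𝒜 n ≤ Submodule.span K (SetLike.coe G') := ⟨G, hcard, hAn⟩
  obtain ⟨G', hcard', hAn'⟩ := hex
  calc Module.finrank K (𝒜 n) ≤ Module.finrank K (Submodule.span K (SetLike.coe G')) :=
        Submodule.finrank_mono hAn'
    _ ≤ G'.card := finrank_span_finset_le_card G'
    _ ≤ S.card + 1 := hcard'
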